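/- arXiv:0712.3288 — 5 statements merged into one kernel-verified Lean document; each statement's English description precedes it below -/
import Mathlib

section
/- The function e(v,u) := (n/2)·λ_max(v⊗v − u), defined on ℝⁿ × S₀ⁿ (symmetric traceless n×n matrices), is convex. -/
open Matrix

/-- The largest eigenvalue of a (Hermitian/symmetric) matrix. -/
noncomputable def lambdaMax {n : ℕ} (w : Matrix (Fin n) (Fin n) ℝ) : ℝ :=
  if h : w.IsHermitian then ⨆ i, h.eigenvalues i else 0

/-- `e(v,u) = (n/2) λ_max (v ⊗ v - u)`. -/
noncomputable def eFun {n : ℕ} (v : EuclideanSpace ℝ (Fin n))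
    (u : Matrix (Fin n) (Fin n) ℝ) : ℝ :=
  (n / 2 : ℝ) * lambdaMax (vecMulVec (fun i => v i) (fun i => v i) - u)

variable {n : ℕ}

lemma psd_smul' {A : Matrix (Fin n) (Fin n) ℝ} (hA : A.PosSemidef) {a : ℝ} (ha : 0 ≤ a) :
    (a • A).PosSemidef := by
  refine Matrix.PosSemidef.of_dotProduct_mulVec_nonneg ?_ fun x => ?_
  · unfold Matrix.IsHermitian
    rw [conjTranspose_smul, hA.1.eq, star_trivial]
  · rw [smul_mulVec, dotProduct_smul]
    exact smul_nonneg ha (hA.dotProduct_mulVec_nonneg x)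

lemma psd_lambdaMax_sub [Nonempty (Fin n)] {w : Matrix (Fin n) (Fin n) ℝ} (h : w.IsHermitian) :
    ((lambdaMax w) • (1 : Matrix (Fin n) (Fin n) ℝ) - w).PosSemidef := by
  have hL : lambdaMax w = ⨆ i, h.eigenvalues i := by rw [lambdaMax, dif_pos h]
  set U : Matrix (Fin n) (Fin n) ℝ := (h.eigenvectorUnitary : Matrix (Fin n) (Fin n) ℝ)
  have hU : U * star U = 1 := Matrix.mem_unitaryGroup_iff.mp h.eigenvectorUnitary.2
  have hd : ∀ i, 0 ≤ lambdaMax w - h.eigenvalues i := by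
    intro i
    rw [hL, sub_nonneg]
    exact le_ciSup (Set.Finite.bddAbove (Set.finite_range _)) i
  have hkey : lambdaMax w • (1 : Matrix (Fin n) (Fin n) ℝ) - w
      = U * diagonal (fun i => lambdaMax w - h.eigenvalues i) * star U := by
    have hdiag : diagonal (fun i => lambdaMax w - h.eigenvalues i)
        = lambdaMax w • (1 : Matrix (Fin n) (Fin n) ℝ)
          - diagonal (RCLike.ofReal ∘ h.eigenvalues) := by
      ext i j
      by_cases hij : i = j <;>
        simp [diagonal, hij, Matrix.one_apply, Matrix.sub_apply]
    rw [hdiag, Matrix.mul_sub, Matrix.sub_mul, Matrix.mul_smul, mul_one, Matrix.smul_mul, hU]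
    congr 1
    exact h.spectral_theorem.trans (Unitary.conjStarAlgAut_apply _ _)
  rw [hkey]
  exact (Matrix.PosSemidef.diagonal hd).mul_mul_conjTranspose_same U

lemma lambdaMax_le' [Nonempty (Fin n)] {w : Matrix (Fin n) (Fin n) ℝ} {t : ℝ}
    (h : w.IsHermitian)
    (hpsd : (t • (1 : Matrix (Fin n) (Fin n) ℝ) - w).PosSemidef) : lambdaMax w ≤ t := by
  rw [lambdaMax, dif_pos h]
  refine ciSup_le fun i => ?_
  set v : Fin n → ℝ := ⇑(h.eigenvectorBasis i) with hv
  have h2 := hpsd.dotProduct_mulVec_nonneg v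
  have hv1 : v ⬝ᵥ v = 1 := by
    have hnorm := h.eigenvectorBasis.orthonormal.1 i
    rw [EuclideanSpace.norm_eq] at hnorm
    have h3 : ∑ j, (v j)^2 = 1 := by
      have := congrArg (· ^ 2) hnorm
      simpa [Real.sq_sqrt (Finset.sum_nonneg fun j _ => sq_nonneg _), sq_abs] using this
    simpa [dotProduct, pow_two] using h3
  have hm : w *ᵥ v = h.eigenvalues i • v := h.mulVec_eigenvectorBasis i
  rw [sub_mulVec, smul_mulVec, one_mulVec, hm,
    dotProduct_sub, dotProduct_smul, dotProduct_smul, star_trivial, hv1] at h2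
  simp only [smul_eq_mul, mul_one] at h2
  linarith

lemma dot_vecMulVec (v x : Fin n → ℝ) :
    x ⬝ᵥ ((vecMulVec v v) *ᵥ x) = (v ⬝ᵥ x) ^ 2 := by
  have h : ∀ i, (vecMulVec v v *ᵥ x) i = v i * (v ⬝ᵥ x) := by
    intro i
    simp [mulVec, vecMulVec_apply, dotProduct, Finset.mul_sum, mul_assoc]
  calc x ⬝ᵥ ((vecMulVec v v) *ᵥ x) = ∑ i, x i * (v i * (v ⬝ᵥ x)) := by
        simp [dotProduct, h]
    _ = (∑ i, x i * v i) * (v ⬝ᵥ x) := by rw [Finset.sum_mul]; exact Finset.sum_congr rfl fun _ _ => by ring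
    _ = (v ⬝ᵥ x) ^ 2 := by rw [show (∑ i, x i * v i) = x ⬝ᵥ v from rfl, dotProduct_comm]; ring

lemma vecMulVec_isHermitian (v : Fin n → ℝ) : (vecMulVec v v).IsHermitian := by
  rw [Matrix.IsHermitian, conjTranspose_eq_transpose_of_trivial]
  ext i j
  simp [vecMulVec_apply, Matrix.transpose_apply, mul_comm]

lemma herm_aux {v : Fin n → ℝ} {u : Matrix (Fin n) (Fin n) ℝ} (hu : u.IsSymm) :
    (vecMulVec v v - u).IsHermitian := by
  rw [Matrix.IsHermitian, conjTranspose_eq_transpose_of_trivial, transpose_sub, hu.eq]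
  congr 1
  ext i j
  simp [vecMulVec_apply, Matrix.transpose_apply, mul_comm]


/-- `e` is convex on ℝⁿ × S₀ⁿ. -/
theorem eFun_convexOn (n : ℕ) (hn : 2 ≤ n) :
    ConvexOn ℝ
      {p : EuclideanSpace ℝ (Fin n) × Matrix (Fin n) (Fin n) ℝ |
        p.2.IsSymm ∧ p.2.trace = 0}
      (fun p => eFun p.1 p.2) := by
  haveI : Nonempty (Fin n) := ⟨⟨0, by omega⟩⟩
  constructor
  · intro p hp q hq a b ha hb hab
    refine ⟨?_, ?_⟩
    · show ((a • p + b • q).2)ᵀ = (a • p + b • q).2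
      show (a • p.2 + b • q.2)ᵀ = a • p.2 + b • q.2
      rw [transpose_add, transpose_smul, transpose_smul, hp.1.eq, hq.1.eq]
    · show (a • p.2 + b • q.2).trace = 0
      rw [trace_add, trace_smul, trace_smul, hp.2, hq.2]
      simp
  · intro p hp q hq a b ha hb hab
    simp only [eFun, smul_eq_mul]
    set v1 : Fin n → ℝ := fun i => p.1 i with hv1
    set v2 : Fin n → ℝ := fun i => q.1 i with hv2
    set f : Fin n → ℝ := fun i => (a • p + b • q).1 i with hfdef
    have hf : f = fun i => a * v1 i + b * v2 i := rfl
    set M1 := vecMulVec v1 v1 - p.2 with hM1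
    set M2 := vecMulVec v2 v2 - q.2 with hM2
    set M := vecMulVec f f - (a • p + b • q).2 with hM
    have hM' : M = vecMulVec f f - (a • p.2 + b • q.2) := rfl
    have h1 : M1.IsHermitian := herm_aux hp.1
    have h2 : M2.IsHermitian := herm_aux hq.1
    have hMherm : M.IsHermitian := by
      apply herm_aux
      show (a • p.2 + b • q.2)ᵀ = a • p.2 + b • q.2
      rw [transpose_add, transpose_smul, transpose_smul, hp.1.eq, hq.1.eq]
    have hD : (a • M1 + b • M2 - M).PosSemidef := by
      have e : a • M1 + b • M2 - M
          = a • vecMulVec v1 v1 + b • vecMulVec v2 v2 - vecMulVec f f := by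
        rw [hM1, hM2, hM']; module
      rw [e]
      refine Matrix.PosSemidef.of_dotProduct_mulVec_nonneg ?_ ?_
      · rw [Matrix.IsHermitian, conjTranspose_eq_transpose_of_trivial, transpose_sub,
          transpose_add, transpose_smul, transpose_smul]
        rw [show (vecMulVec v1 v1)ᵀ = vecMulVec v1 v1 by
            rw [← conjTranspose_eq_transpose_of_trivial]; exact (vecMulVec_isHermitian v1).eq,
          show (vecMulVec v2 v2)ᵀ = vecMulVec v2 v2 by
            rw [← conjTranspose_eq_transpose_of_trivial]; exact (vecMulVec_isHermitian v2).eq,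
          show (vecMulVec f f)ᵀ = vecMulVec f f by
            rw [← conjTranspose_eq_transpose_of_trivial]; exact (vecMulVec_isHermitian f).eq]
      · intro x
        rw [star_trivial]
        rw [sub_mulVec, add_mulVec, smul_mulVec, smul_mulVec,
          dotProduct_sub, dotProduct_add, dotProduct_smul, dotProduct_smul,
          dot_vecMulVec, dot_vecMulVec, dot_vecMulVec]
        have hfx : f ⬝ᵥ x = a * (v1 ⬝ᵥ x) + b * (v2 ⬝ᵥ x) := by
          rw [hf]
          simp [dotProduct, Finset.sum_add_distrib, Finset.mul_sum, add_mul, mul_assoc]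
        rw [hfx]
        simp only [smul_eq_mul]
        nlinarith [mul_nonneg (mul_nonneg ha hb) (sq_nonneg (v1 ⬝ᵥ x - v2 ⬝ᵥ x))]
    have key : ((a * lambdaMax M1 + b * lambdaMax M2) • (1 : Matrix (Fin n) (Fin n) ℝ)
        - M).PosSemidef := by
      have e : (a * lambdaMax M1 + b * lambdaMax M2) • (1 : Matrix (Fin n) (Fin n) ℝ) - M
          = a • (lambdaMax M1 • 1 - M1) + b • (lambdaMax M2 • 1 - M2)
            + (a • M1 + b • M2 - M) := by module
      rw [e]
      exact ((psd_smul' (psd_lambdaMax_sub h1) ha).add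
        (psd_smul' (psd_lambdaMax_sub h2) hb)).add hD
    have hle : lambdaMax M ≤ a * lambdaMax M1 + b * lambdaMax M2 :=
      lambdaMax_le' hMherm key
    have hn2 : (0:ℝ) ≤ (n : ℝ) / 2 := by positivity
    nlinarith [mul_le_mul_of_nonneg_left hle hn2]
end

section
/- For all (v,u) ∈ ℝⁿ × S₀ⁿ one has (1/2)|v|² ≤ e(v,u), with equality if and only if u = v⊗v − (|v|²/n)·Iₙ. -/
open Matrix

lemma trace_eq_sum_eig {n : ℕ} {w : Matrix (Fin n) (Fin n) ℝ} (h : w.IsHermitian) :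
    w.trace = ∑ i, h.eigenvalues i := by
  conv_lhs => rw [h.spectral_theorem]
  rw [Unitary.conjStarAlgAut_apply, Matrix.trace_mul_cycle, Unitary.coe_star_mul_self, one_mul]
  simp [Matrix.trace_diagonal]

lemma eq_smul_one_of_eig_const {n : ℕ} {w : Matrix (Fin n) (Fin n) ℝ} (hw : w.IsHermitian)
    (c : ℝ) (h : ∀ i, hw.eigenvalues i = c) : w = c • 1 := by
  have hd : Matrix.diagonal (RCLike.ofReal ∘ hw.eigenvalues)
      = c • (1 : Matrix (Fin n) (Fin n) ℝ) := by
    rw [Matrix.smul_one_eq_diagonal]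
    have hfun : (RCLike.ofReal ∘ hw.eigenvalues : Fin n → ℝ) = fun _ => c := by
      funext i; simp [h i]
    rw [hfun]
  conv_lhs => rw [hw.spectral_theorem]
  rw [hd, Unitary.conjStarAlgAut_apply, Matrix.mul_smul, Matrix.smul_mul, mul_one,
    (Matrix.mem_unitaryGroup_iff).mp (Matrix.IsHermitian.eigenvectorUnitary hw).2]

lemma eig_const_of_eq_smul_one {n : ℕ} {w : Matrix (Fin n) (Fin n) ℝ} (hw : w.IsHermitian)
    (c : ℝ) (hwc : w = c • 1) (j : Fin n) : hw.eigenvalues j = c := by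
  have hmv' := hw.mulVec_eigenvectorBasis j
  have hcv : w *ᵥ (WithLp.equiv 2 (Fin n → ℝ)) (hw.eigenvectorBasis j)
      = c • (WithLp.equiv 2 (Fin n → ℝ)) (hw.eigenvectorBasis j) := by
    refine (congrArg (fun M : Matrix (Fin n) (Fin n) ℝ =>
      M *ᵥ (WithLp.equiv 2 (Fin n → ℝ)) (hw.eigenvectorBasis j)) hwc).trans ?_
    rw [Matrix.smul_mulVec, Matrix.one_mulVec]
  have hmv := hcv.symm.trans hmv'
  have hxne : hw.eigenvectorBasis j ≠ 0 := by
    have h1 : ‖hw.eigenvectorBasis j‖ = 1 := hw.eigenvectorBasis.orthonormal.1 j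
    intro h0; rw [h0, norm_zero] at h1; norm_num at h1
  obtain ⟨i, hi⟩ : ∃ i, hw.eigenvectorBasis j i ≠ 0 := by
    by_contra hcon
    push_neg at hcon
    exact hxne (by ext i; simpa using hcon i)
  have h1 := congrFun hmv i
  simp only [Pi.smul_apply, smul_eq_mul, WithLp.equiv_apply] at h1
  exact (mul_left_inj' hi).mp h1.symm

/-- `(1/2)|v|² ≤ e(v,u)`, with equality iff `u = v⊗v − (|v|²/n)·Iₙ`. -/
theorem half_norm_sq_le_eFun (n : ℕ) (hn : 2 ≤ n)
    (v : EuclideanSpace ℝ (Fin n)) (u : Matrix (Fin n) (Fin n) ℝ)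
    (hsymm : u.IsSymm) (htr : u.trace = 0) :
    (1 / 2 : ℝ) * ‖v‖ ^ 2 ≤ eFun v u ∧
    ((1 / 2 : ℝ) * ‖v‖ ^ 2 = eFun v u ↔
      u = vecMulVec (fun i => v i) (fun i => v i)
            - (‖v‖ ^ 2 / n) • (1 : Matrix (Fin n) (Fin n) ℝ)) := by
  have hn0 : 0 < n := lt_of_lt_of_le (by norm_num) hn
  have hnR : (0 : ℝ) < n := by exact_mod_cast hn0
  set w : Matrix (Fin n) (Fin n) ℝ := vecMulVec (fun i => v i) (fun i => v i) - u with hwdef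
  have h1 : (vecMulVec (fun i => v i) (fun i => v i)).IsHermitian := by
    ext i j
    simp [Matrix.conjTranspose_apply, Matrix.vecMulVec_apply, mul_comm]
  have h2 : u.IsHermitian := by
    ext i j
    simp [Matrix.conjTranspose_apply, hsymm.apply]
  have hw : w.IsHermitian := h1.sub h2
  have htrw : w.trace = ‖v‖ ^ 2 := by
    rw [hwdef, Matrix.trace_sub, htr, sub_zero, Matrix.trace,
      EuclideanSpace.norm_eq]
    rw [Real.sq_sqrt (by positivity)]
    simp [Matrix.diag, Matrix.vecMulVec_apply, Real.norm_eq_abs, sq_abs, sq]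
  have hlam : lambdaMax w = ⨆ i, hw.eigenvalues i := by
    rw [lambdaMax, dif_pos hw]
  have hne : Nonempty (Fin n) := ⟨⟨0, hn0⟩⟩
  obtain ⟨j, hj⟩ := Finite.exists_max hw.eigenvalues
  have hsup : (⨆ i, hw.eigenvalues i) = hw.eigenvalues j :=
    le_antisymm (ciSup_le hj) (le_ciSup (Finite.bddAbove_range _) j)
  have hsum : ∑ i, hw.eigenvalues i = ‖v‖ ^ 2 := by rw [← trace_eq_sum_eig hw, htrw]
  have hsumle : ‖v‖ ^ 2 ≤ (n : ℝ) * hw.eigenvalues j := by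
    rw [← hsum]
    calc ∑ i, hw.eigenvalues i ≤ ∑ _i : Fin n, hw.eigenvalues j :=
          Finset.sum_le_sum fun i _ => hj i
      _ = (n : ℝ) * hw.eigenvalues j := by simp [mul_comm]
  have heFun : eFun v u = (n / 2 : ℝ) * hw.eigenvalues j := by
    rw [eFun, ← hwdef, hlam, hsup]
  constructor
  · rw [heFun]; linarith
  · constructor
    · intro heq
      rw [heFun] at heq
      have hjval : hw.eigenvalues j = ‖v‖ ^ 2 / n := by
        field_simp at heq ⊢
        linarith
      have hall : ∀ i, hw.eigenvalues i = ‖v‖ ^ 2 / n := by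
        intro i
        by_contra hne'
        have hlt : hw.eigenvalues i < hw.eigenvalues j := by
          rcases lt_or_eq_of_le (hj i) with h | h
          · exact h
          · exact absurd (h.trans hjval) hne'
        have : ∑ k, hw.eigenvalues k < ∑ _k : Fin n, hw.eigenvalues j :=
          Finset.sum_lt_sum (fun k _ => hj k) ⟨i, Finset.mem_univ i, hlt⟩
        rw [hsum] at this
        simp only [Finset.sum_const, Finset.card_univ, Fintype.card_fin, nsmul_eq_mul,
          hjval] at this
        have : ‖v‖ ^ 2 < ‖v‖ ^ 2 := by
          calc ‖v‖ ^ 2 < (n : ℝ) * (‖v‖ ^ 2 / n) := this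
            _ = ‖v‖ ^ 2 := by field_simp
        exact lt_irrefl _ this
      have hwc : w = (‖v‖ ^ 2 / n) • 1 := eq_smul_one_of_eig_const hw _ hall
      have : u = vecMulVec (fun i => v i) (fun i => v i) - w := by
        rw [hwdef]; abel
      rw [this, hwc]
    · intro hu
      have hwc : w = (‖v‖ ^ 2 / n) • 1 := by
        rw [hwdef, hu]; abel
      have hjval : hw.eigenvalues j = ‖v‖ ^ 2 / n :=
        eig_const_of_eq_smul_one hw _ hwc j
      rw [heFun, hjval]
      field_simp
end

section
/- For all (v,u) ∈ ℝⁿ × S₀ⁿ the operator norm of u satisfies |u|_∞ ≤ 2·((n−1)/n)·e(v,u). -/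
open Matrix

/-- The operator norm of a matrix, acting on Euclidean space. -/
noncomputable def opNorm {n : ℕ} (u : Matrix (Fin n) (Fin n) ℝ) : ℝ :=
  ‖(Matrix.toEuclideanCLM (𝕜 := ℝ) (n := Fin n)) u‖

open scoped InnerProductSpace

namespace OpNormAux

variable {n : ℕ}

lemma clm_apply (w : Matrix (Fin n) (Fin n) ℝ) (x : EuclideanSpace ℝ (Fin n)) (j : Fin n) :
    (Matrix.toEuclideanCLM (𝕜 := ℝ) (n := Fin n) w) x j = (w *ᵥ (fun i => x i)) j := rfl

lemma clm_eigen (w : Matrix (Fin n) (Fin n) ℝ) (hw : w.IsHermitian) (i : Fin n) :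
    (Matrix.toEuclideanCLM (𝕜 := ℝ) (n := Fin n) w) (hw.eigenvectorBasis i)
      = hw.eigenvalues i • hw.eigenvectorBasis i := by
  ext j
  have := congrFun (hw.mulVec_eigenvectorBasis i) j
  simpa [clm_apply] using this

lemma selfAdjoint_clm (w : Matrix (Fin n) (Fin n) ℝ) (hw : w.IsHermitian) :
    IsSelfAdjoint (Matrix.toEuclideanCLM (𝕜 := ℝ) (n := Fin n) w) := by
  rw [_root_.IsSelfAdjoint, ← map_star]
  exact congrArg _ hw

lemma repr_clm (w : Matrix (Fin n) (Fin n) ℝ) (hw : w.IsHermitian)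
    (x : EuclideanSpace ℝ (Fin n)) (i : Fin n) :
    hw.eigenvectorBasis.repr ((Matrix.toEuclideanCLM (𝕜 := ℝ) (n := Fin n) w) x) i
      = hw.eigenvalues i * hw.eigenvectorBasis.repr x i := by
  have hT := (ContinuousLinearMap.isSelfAdjoint_iff'.mp (selfAdjoint_clm w hw))
  rw [OrthonormalBasis.repr_apply_apply, ← ContinuousLinearMap.adjoint_inner_left, hT,
    clm_eigen w hw i, real_inner_smul_left, OrthonormalBasis.repr_apply_apply]

lemma norm_sq_repr (b : OrthonormalBasis (Fin n) ℝ (EuclideanSpace ℝ (Fin n)))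
    (y : EuclideanSpace ℝ (Fin n)) : ‖y‖^2 = ∑ i, (b.repr y i)^2 := by
  rw [← LinearIsometryEquiv.norm_map b.repr y, EuclideanSpace.norm_eq,
    Real.sq_sqrt (by positivity)]
  simp [sq_abs]

lemma inner_clm_eq_sum (w : Matrix (Fin n) (Fin n) ℝ) (hw : w.IsHermitian)
    (x : EuclideanSpace ℝ (Fin n)) :
    ⟪x, (Matrix.toEuclideanCLM (𝕜 := ℝ) (n := Fin n) w) x⟫_ℝ
      = ∑ i, hw.eigenvalues i * (hw.eigenvectorBasis.repr x i)^2 := by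
  rw [← hw.eigenvectorBasis.repr.inner_map_map x]
  simp only [PiLp.inner_apply, RCLike.inner_apply, starRingEnd_apply, star_trivial, repr_clm]
  exact Finset.sum_congr rfl fun i _ => by ring

lemma rayleigh_le [NeZero n] (w : Matrix (Fin n) (Fin n) ℝ) (hw : w.IsHermitian)
    (x : EuclideanSpace ℝ (Fin n)) :
    ⟪x, (Matrix.toEuclideanCLM (𝕜 := ℝ) (n := Fin n) w) x⟫_ℝ
      ≤ (⨆ i, hw.eigenvalues i) * ‖x‖^2 := by
  rw [inner_clm_eq_sum w hw, norm_sq_repr hw.eigenvectorBasis, Finset.mul_sum]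
  refine Finset.sum_le_sum fun i _ => ?_
  exact mul_le_mul_of_nonneg_right (le_ciSup (Set.Finite.bddAbove (Set.finite_range _)) i)
    (sq_nonneg _)

lemma norm_clm_le (w : Matrix (Fin n) (Fin n) ℝ) (hw : w.IsHermitian)
    (C : ℝ) (hC0 : 0 ≤ C) (hC : ∀ i, |hw.eigenvalues i| ≤ C) :
    ‖(Matrix.toEuclideanCLM (𝕜 := ℝ) (n := Fin n)) w‖ ≤ C := by
  refine ContinuousLinearMap.opNorm_le_bound _ hC0 fun x => ?_
  have h1 : ‖(Matrix.toEuclideanCLM (𝕜 := ℝ) (n := Fin n) w) x‖^2 ≤ (C * ‖x‖)^2 := by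
    rw [norm_sq_repr hw.eigenvectorBasis, mul_pow, norm_sq_repr hw.eigenvectorBasis x,
      Finset.mul_sum]
    refine Finset.sum_le_sum fun i _ => ?_
    rw [repr_clm, mul_pow]
    refine mul_le_mul_of_nonneg_right ?_ (sq_nonneg _)
    rw [← sq_abs]
    exact pow_le_pow_left₀ (abs_nonneg _) (hC i) 2
  have := Real.sqrt_le_sqrt h1
  rwa [Real.sqrt_sq (norm_nonneg _), Real.sqrt_sq (mul_nonneg hC0 (norm_nonneg _))] at this

lemma sum_eigenvalues_eq_trace (w : Matrix (Fin n) (Fin n) ℝ) (hw : w.IsHermitian) :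
    ∑ i, hw.eigenvalues i = w.trace := by
  nth_rewrite 2 [hw.spectral_theorem]
  rw [Unitary.conjStarAlgAut_apply, Matrix.trace_mul_cycle, Unitary.coe_star_mul_self, one_mul, Matrix.trace_diagonal]
  simp

lemma inner_vecMulVec_nonneg (a : Fin n → ℝ) (x : EuclideanSpace ℝ (Fin n)) :
    0 ≤ ⟪x, (Matrix.toEuclideanCLM (𝕜 := ℝ) (n := Fin n) (vecMulVec a a)) x⟫_ℝ := by
  have h : ⟪x, (Matrix.toEuclideanCLM (𝕜 := ℝ) (n := Fin n) (vecMulVec a a)) x⟫_ℝ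
      = (∑ i, a i * x i)^2 := by
    calc ⟪x, (Matrix.toEuclideanCLM (𝕜 := ℝ) (n := Fin n) (vecMulVec a a)) x⟫_ℝ
        = ∑ i, x i * ∑ j, (a i * a j) * x j := by
          simp [PiLp.inner_apply, clm_apply, Matrix.mulVec, dotProduct, vecMulVec_apply]
          exact Finset.sum_congr rfl fun i _ => mul_comm _ _
      _ = (∑ i, a i * x i) * (∑ j, a j * x j) := by
          rw [Finset.sum_mul_sum]
          refine Finset.sum_congr rfl fun i _ => ?_
          rw [Finset.mul_sum]
          exact Finset.sum_congr rfl fun j _ => by ring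
      _ = (∑ i, a i * x i)^2 := (sq _).symm
  rw [h]
  exact sq_nonneg _

end OpNormAux

open OpNormAux in
/-- `|u|_∞ ≤ 2 ((n−1)/n) e(v,u)`. -/
theorem opNorm_le_eFun (n : ℕ) (hn : 2 ≤ n)
    (v : EuclideanSpace ℝ (Fin n)) (u : Matrix (Fin n) (Fin n) ℝ)
    (hsymm : u.IsSymm) (htr : u.trace = 0) :
    opNorm u ≤ 2 * ((n - 1 : ℝ) / n) * eFun v u := by
  classical
  haveI : NeZero n := ⟨by omega⟩
  have hnR : (0:ℝ) < n := by exact_mod_cast Nat.pos_of_ne_zero (by omega)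
  have hn1 : (1:ℝ) ≤ (n:ℝ) - 1 := by
    have : (2:ℝ) ≤ n := by exact_mod_cast hn
    linarith
  set a : Fin n → ℝ := fun i => v i with ha
  have hu : u.IsHermitian := by
    rw [Matrix.IsHermitian, conjTranspose_eq_transpose_of_trivial]
    exact hsymm
  have hvv : (vecMulVec a a).IsHermitian := by
    rw [Matrix.IsHermitian]
    ext i j
    simp [Matrix.conjTranspose_apply, vecMulVec_apply, mul_comm]
  set M : Matrix (Fin n) (Fin n) ℝ := vecMulVec a a - u with hMdef
  have hM : M.IsHermitian := hvv.sub hu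
  set lam : ℝ := ⨆ i, hM.eigenvalues i with hlam
  have hlmax : lambdaMax M = lam := by rw [lambdaMax, dif_pos hM]
  have h_eig_le : ∀ i, hM.eigenvalues i ≤ lam :=
    fun i => le_ciSup (Set.Finite.bddAbove (Set.finite_range _)) i
  -- lam is nonnegative
  have htraceM : (0:ℝ) ≤ M.trace := by
    rw [hMdef, Matrix.trace_sub, htr, sub_zero, Matrix.trace]
    refine Finset.sum_nonneg fun i _ => ?_
    simp only [Matrix.diag_apply, vecMulVec_apply]
    exact mul_self_nonneg _
  have hlam0 : 0 ≤ lam := by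
    by_contra hneg
    push_neg at hneg
    have hsum : ∑ i, hM.eigenvalues i ≤ ∑ _i : Fin n, lam :=
      Finset.sum_le_sum fun i _ => h_eig_le i
    rw [sum_eigenvalues_eq_trace M hM, Finset.sum_const, Finset.card_univ,
      Fintype.card_fin] at hsum
    have : (n:ℝ) * lam < 0 := mul_neg_of_pos_of_neg hnR hneg
    simp only [nsmul_eq_mul] at hsum
    linarith
  -- lower bound for eigenvalues of u
  have hlow : ∀ i, -(hu.eigenvalues i) ≤ lam := by
    intro i
    set x : EuclideanSpace ℝ (Fin n) := hu.eigenvectorBasis i with hx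
    have hx1 : ‖x‖ = 1 := hu.eigenvectorBasis.orthonormal.1 i
    have h1 : ⟪x, (Matrix.toEuclideanCLM (𝕜 := ℝ) (n := Fin n) M) x⟫_ℝ ≤ lam := by
      have := rayleigh_le M hM x
      rwa [hx1, one_pow, mul_one] at this
    have h2 : ⟪x, (Matrix.toEuclideanCLM (𝕜 := ℝ) (n := Fin n) M) x⟫_ℝ
        = ⟪x, (Matrix.toEuclideanCLM (𝕜 := ℝ) (n := Fin n) (vecMulVec a a)) x⟫_ℝ
          - hu.eigenvalues i := by
      rw [hMdef, map_sub, ContinuousLinearMap.sub_apply, inner_sub_right]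
      congr 1
      rw [clm_eigen u hu i, real_inner_smul_right, real_inner_self_eq_norm_sq, hx1]
      ring
    have h3 := inner_vecMulVec_nonneg a x
    rw [h2] at h1
    linarith
  -- upper bound for eigenvalues of u
  have hup : ∀ i, hu.eigenvalues i ≤ ((n:ℝ) - 1) * lam := by
    intro i
    have hzero : hu.eigenvalues i + ∑ j ∈ Finset.univ.erase i, hu.eigenvalues j = 0 := by
      rw [Finset.add_sum_erase _ _ (Finset.mem_univ i), sum_eigenvalues_eq_trace u hu, htr]
    have hb : -(((n:ℝ) - 1) * lam) ≤ ∑ j ∈ Finset.univ.erase i, hu.eigenvalues j := by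
      have : ∑ _j ∈ Finset.univ.erase i, (-lam) ≤ ∑ j ∈ Finset.univ.erase i, hu.eigenvalues j :=
        Finset.sum_le_sum fun j _ => neg_le.mpr (hlow j)
      rwa [Finset.sum_const, Finset.card_erase_of_mem (Finset.mem_univ i), Finset.card_univ,
        Fintype.card_fin, nsmul_eq_mul, Nat.cast_sub (by omega), Nat.cast_one,
        mul_neg, ← neg_mul, neg_mul] at this
    linarith
  have habs : ∀ i, |hu.eigenvalues i| ≤ ((n:ℝ) - 1) * lam := by
    intro i
    rw [abs_le]
    constructor
    · have h1 : -(hu.eigenvalues i) ≤ lam := hlow i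
      nlinarith
    · exact hup i
  have hC0 : 0 ≤ ((n:ℝ) - 1) * lam := mul_nonneg (by linarith) hlam0
  have hnorm := norm_clm_le u hu _ hC0 habs
  have hrhs : 2 * ((n - 1 : ℝ) / n) * eFun v u = ((n:ℝ) - 1) * lam := by
    rw [eFun, hlmax]
    field_simp
  rw [hrhs]
  exact hnorm
end

section
/- Let a,b ∈ ℝ^{n+1} with a_{n+1} = b_{n+1} = 0, |a| = |b|, a ≠ ±b. Set R := a⊗b − b⊗a and Q(ξ) := ξ⊗e_{n+1} − e_{n+1}⊗ξ, and define A(ξ) := (1/2)(Rξ ⊗ Q(ξ)ξ + Q(ξ)ξ ⊗ Rξ). Then for every ξ ∈ ℝ^{n+1}: A(ξ)ξ = 0, A(ξ) is symmetric, ⟨A(ξ)e_{n+1}, e_{n+1}⟩ = 0, and tr A(ξ) = 0. -/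
open Matrix

private lemma vmv_mulVec {n : ℕ} (u v x : Fin n → ℝ) :
    (vecMulVec u v).mulVec x = (v ⬝ᵥ x) • u := by
  funext i
  simp [vecMulVec_apply, mulVec, dotProduct, Finset.mul_sum, mul_assoc, mul_comm, mul_left_comm, smul_eq_mul]

private lemma vmv_trace {n : ℕ} (u v : Fin n → ℝ) :
    (vecMulVec u v).trace = u ⬝ᵥ v := by
  simp [trace, vecMulVec_apply, dotProduct, diag]

private lemma vmv_transpose {n : ℕ} (u v : Fin n → ℝ) :
    (vecMulVec u v)ᵀ = vecMulVec v u := by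
  ext i j; simp [vecMulVec_apply, mul_comm]

/-- the cubic matrix-valued symbol `A(ξ) = (Rξ) ⊙ (Q(ξ)ξ)`
satisfies `A(ξ)ξ = 0`, symmetry, vanishing `(n+1,n+1)` entry and zero trace. -/
theorem symbol_properties (n : ℕ) (hn : 2 ≤ n)
    (a b : EuclideanSpace ℝ (Fin (n + 1)))
    (ha : a (Fin.last n) = 0) (hb : b (Fin.last n) = 0)
    (hab : ‖a‖ = ‖b‖) (hne : a ≠ b) (hne' : a ≠ -b) :
    let e : Fin (n + 1) → ℝ := Pi.single (Fin.last n) 1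
    let R : Matrix (Fin (n + 1)) (Fin (n + 1)) ℝ :=
      vecMulVec (fun i => a i) (fun i => b i) - vecMulVec (fun i => b i) (fun i => a i)
    let Q : (Fin (n + 1) → ℝ) → Matrix (Fin (n + 1)) (Fin (n + 1)) ℝ :=
      fun ξ => vecMulVec ξ e - vecMulVec e ξ
    let A : (Fin (n + 1) → ℝ) → Matrix (Fin (n + 1)) (Fin (n + 1)) ℝ :=
      fun ξ => (1 / 2 : ℝ) •
        (vecMulVec (R.mulVec ξ) ((Q ξ).mulVec ξ)
          + vecMulVec ((Q ξ).mulVec ξ) (R.mulVec ξ))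
    ∀ ξ : Fin (n + 1) → ℝ,
      (A ξ).mulVec ξ = 0 ∧ (A ξ).IsSymm ∧
      ((A ξ).mulVec e) ⬝ᵥ e = 0 ∧ (A ξ).trace = 0 := by
  intro e R Q A ξ
  have hRξ : R.mulVec ξ = ((fun i => b i) ⬝ᵥ ξ) • (fun i => a i)
      - ((fun i => a i) ⬝ᵥ ξ) • (fun i => b i) := by
    simp [R, Matrix.sub_mulVec, vmv_mulVec]
  have hQξ : (Q ξ).mulVec ξ = (e ⬝ᵥ ξ) • ξ - (ξ ⬝ᵥ ξ) • e := by
    simp [Q, Matrix.sub_mulVec, vmv_mulVec]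
  have hRd : R.mulVec ξ ⬝ᵥ ξ = 0 := by
    rw [hRξ]
    simp [sub_dotProduct, smul_dotProduct, smul_eq_mul]
    ring
  have hQd : (Q ξ).mulVec ξ ⬝ᵥ ξ = 0 := by
    rw [hQξ]
    simp [sub_dotProduct, smul_dotProduct, smul_eq_mul, dotProduct_comm e ξ]
    ring
  have hRe : R.mulVec ξ ⬝ᵥ e = 0 := by
    rw [hRξ]
    simp [sub_dotProduct, smul_dotProduct, smul_eq_mul, e, dotProduct_single, ha, hb]
  have hQe : (Q ξ).mulVec ξ ⬝ᵥ R.mulVec ξ = 0 := by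
    rw [hQξ, sub_dotProduct, smul_dotProduct, smul_dotProduct,
      dotProduct_comm ξ (R.mulVec ξ), dotProduct_comm e (R.mulVec ξ), hRd, hRe]
    simp
  refine ⟨?_, ?_, ?_, ?_⟩
  · show ((1 / 2 : ℝ) • (vecMulVec (R.mulVec ξ) ((Q ξ).mulVec ξ)
          + vecMulVec ((Q ξ).mulVec ξ) (R.mulVec ξ))).mulVec ξ = 0
    rw [Matrix.smul_mulVec, Matrix.add_mulVec, vmv_mulVec, vmv_mulVec, hRd, hQd]
    simp
  · show ((1 / 2 : ℝ) • (vecMulVec (R.mulVec ξ) ((Q ξ).mulVec ξ)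
          + vecMulVec ((Q ξ).mulVec ξ) (R.mulVec ξ))).IsSymm
    unfold Matrix.IsSymm
    rw [transpose_smul, transpose_add, vmv_transpose, vmv_transpose,
      add_comm (vecMulVec ((Q ξ).mulVec ξ) (R.mulVec ξ))]
  · show ((1 / 2 : ℝ) • (vecMulVec (R.mulVec ξ) ((Q ξ).mulVec ξ)
          + vecMulVec ((Q ξ).mulVec ξ) (R.mulVec ξ))).mulVec e ⬝ᵥ e = 0
    rw [Matrix.smul_mulVec, Matrix.add_mulVec, vmv_mulVec, vmv_mulVec]
    simp [smul_dotProduct, add_dotProduct, hRe]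
  · show ((1 / 2 : ℝ) • (vecMulVec (R.mulVec ξ) ((Q ξ).mulVec ξ)
          + vecMulVec ((Q ξ).mulVec ξ) (R.mulVec ξ))).trace = 0
    have hQe' : R.mulVec ξ ⬝ᵥ (Q ξ).mulVec ξ = 0 := by rw [dotProduct_comm]; exact hQe
    rw [trace_smul, trace_add, vmv_trace, vmv_trace, hQe', hQe]
    simp
end

section
/- Let (X,d) be a complete metric space and I : X → ℝ a bounded lower-semicontinuous functional with I ≤ 0 on X. Suppose there is a dense subset X₀ ⊂ X such that for every α > 0 there exists β > 0 with the property: whenever v ∈ X₀ and I(v) < −α, there exists a sequence v_k ∈ X₀ with v_k → v in X and liminf I(v_k) ≥ I(v) + β. Then the set {v ∈ X : I(v) = 0} is residual (contains a dense G_δ) in X. -/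
open Filter Topology

/-- the abstract Baire-category argument: a bounded
lower-semicontinuous nonpositive functional with the perturbation property
on a dense subset of a complete metric space vanishes on a residual set. -/
theorem baire_category_criterion {X : Type*} [MetricSpace X] [CompleteSpace X]
    (I : X → ℝ) (hbdd : ∃ M : ℝ, ∀ v, |I v| ≤ M)
    (hlsc : LowerSemicontinuous I) (hnonpos : ∀ v, I v ≤ 0)
    (X₀ : Set X) (hdense : Dense X₀)
    (hperturb : ∀ α : ℝ, 0 < α → ∃ β : ℝ, 0 < β ∧
      ∀ v ∈ X₀, I v < -α →
        ∃ w : ℕ → X, (∀ k, w k ∈ X₀) ∧ Tendsto w atTop (𝓝 v) ∧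
          I v + β ≤ atTop.liminf (fun k => I (w k))) :
    {v : X | I v = 0} ∈ residual X := by
  obtain ⟨M, hM⟩ := hbdd
  -- main claim: for each α > 0, {v | -α < I v} is dense
  have key : ∀ α : ℝ, 0 < α → Dense {v : X | -α < I v} := by
    intro α hα
    rw [dense_iff_inter_open]
    intro U hU hUne
    by_contra hcon
    rw [Set.not_nonempty_iff_eq_empty] at hcon
    have hle : ∀ v ∈ U, I v ≤ -α := by
      intro v hv
      by_contra h
      push_neg at h
      exact (Set.eq_empty_iff_forall_notMem.1 hcon v) ⟨hv, h⟩
    -- s = sup of I over U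
    set s : ℝ := sSup (I '' U) with hs
    have hUne' : (I '' U).Nonempty := hUne.image I
    have hbddA : BddAbove (I '' U) := ⟨0, by rintro y ⟨u, _, rfl⟩; exact hnonpos u⟩
    have hsle : ∀ v ∈ U, I v ≤ s := fun v hv => le_csSup hbddA ⟨v, hv, rfl⟩
    have hsneg : s ≤ -α := csSup_le hUne' (by rintro y ⟨u, hu, rfl⟩; exact hle u hu)
    obtain ⟨β, hβ, hβprop⟩ := hperturb (α / 2) (by linarith)
    -- pick u ∈ U with I u > s - β/4
    obtain ⟨y, ⟨u, hu, rfl⟩, hy⟩ := exists_lt_of_lt_csSup hUne' (show s - β / 4 < s by linarith)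
    -- lsc: I > I u - β/4 near u
    have hev : ∀ᶠ x in 𝓝 u, I u - β / 4 < I x := hlsc u (I u - β / 4) (by linarith)
    obtain ⟨O, hOsub, hOopen, huO⟩ := eventually_nhds_iff.1 hev
    -- pick v ∈ X₀ ∩ (U ∩ O)
    obtain ⟨v, hvUO, hvX₀⟩ :=
      hdense.inter_open_nonempty (U ∩ O) (hU.inter hOopen) ⟨u, hu, huO⟩
    obtain ⟨hvU, hvO⟩ := hvUO
    have hIv1 : s - β / 2 < I v := by
      have := hOsub v hvO; linarith
    have hIv2 : I v < -(α / 2) := by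
      have := hle v hvU; linarith
    obtain ⟨w, hwX₀, hwtend, hwliminf⟩ := hβprop v hvX₀ hIv2
    -- eventually w k ∈ U, so I (w k) ≤ s
    have hevU : ∀ᶠ k in atTop, I (w k) ≤ s := by
      filter_upwards [hwtend.eventually (hU.mem_nhds hvU)] with k hk
      exact hsle _ hk
    have hbdd : IsBoundedUnder (· ≥ ·) atTop (fun k => I (w k)) :=
      ⟨-M, eventually_map.2 (Eventually.of_forall fun (k : ℕ) => neg_le_of_abs_le (hM (w k)))⟩
    have hliminfle : atTop.liminf (fun k => I (w k)) ≤ s := by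
      refine liminf_le_of_le hbdd ?_
      intro b hb
      obtain ⟨k, hb1, hb2⟩ := (hb.and hevU).exists
      exact hb1.trans hb2
    linarith
  -- openness
  have hopen : ∀ α : ℝ, IsOpen {v : X | -α < I v} := fun α => by
    simpa [Set.preimage, Set.Ioi] using hlsc.isOpen_preimage (-α)
  have hmem : (⋂ n : ℕ, {v : X | -(1 / (n + 1 : ℝ)) < I v}) ∈ residual X := by
    refine (countable_iInter_mem).2 fun n => ?_
    exact residual_of_dense_open (hopen _) (key _ (by positivity))
  refine mem_of_superset hmem ?_
  intro v hv
  simp only [Set.mem_iInter, Set.mem_setOf_eq] at hv ⊢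
  refine le_antisymm (hnonpos v) ?_
  by_contra h
  push_neg at h
  obtain ⟨n, hn⟩ := exists_nat_one_div_lt (show 0 < -I v by linarith)
  have := hv n
  linarith
end
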